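/- Let p̄_k(λ) = ∑_i [(-1)^{λ_i-i+1}(λ_i-i+1/2)^k - (-1)^{-i+1}(-i+1/2)^k] + c_k, where the constants c_k = p̄_k(∅) are determined by ∑_k c_k z^k/k! = 1/(e^{z/2}+e^{-z/2}). Then for every partition λ and every k ≥ 0, p̄_k(λ') = (-1)^k p̄_k(λ), where λ' is the conjugate partition. -/

import Mathlib

/-- The constants `c_k = p̄_k(∅)`, determined by `∑_k c_k z^k/k! = 1/(e^{z/2}+e^{-z/2})`. -/
noncomputable def ckQ (k : ℕ) : ℚ :=
  (k.factorial : ℚ) * PowerSeries.coeff (R := ℚ) k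
    (PowerSeries.mk fun n => (((1 : ℚ) / 2) ^ n + (-(1 : ℚ) / 2) ^ n) / n.factorial)⁻¹

/-- `p̄_k(λ) = ∑_i [(-1)^{λ_i-i+1}(λ_i-i+1/2)^k - (-1)^{-i+1}(-i+1/2)^k] + c_k`,
the sum taken over `i ≤ N` for any `N` beyond which all terms vanish. -/
noncomputable def pbar (k : ℕ) (lam : ℕ → ℕ) (N : ℕ) : ℝ :=
  (∑ n ∈ Finset.range N,
      ((-1 : ℝ) ^ (lam n + n) * ((lam n : ℝ) - n - 1 / 2) ^ k -
        (-1 : ℝ) ^ n * (-(n : ℝ) - 1 / 2) ^ k)) + (ckQ k : ℝ)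

/-- The conjugate partition: `λ'_{n+1} = #{m : λ_{m+1} > n}`. -/
noncomputable def conjP (lam : ℕ → ℕ) : ℕ → ℕ := fun n => Set.ncard {m : ℕ | n < lam m}

open Finset

/-! ### Auxiliary lemmas -/

lemma mem_iff_lt_ncard' {S : Set ℕ} (hfin : S.Finite)
    (hdc : ∀ a b : ℕ, a ≤ b → b ∈ S → a ∈ S) (i : ℕ) : i ∈ S ↔ i < S.ncard := by
  constructor
  · intro hi
    have h1 : Set.Iic i ⊆ S := fun a ha => hdc a i ha hi
    have h2 := Set.ncard_le_ncard h1 hfin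
    have h3 : (Set.Iic i).ncard = i + 1 := by
      rw [← Finset.coe_Iic, Set.ncard_coe_finset, Nat.card_Iic]
    omega
  · intro h
    by_contra hi
    have hsub : S ⊆ Set.Iio i := by
      intro b hb
      by_contra hbi
      exact hi (hdc i b (le_of_not_gt hbi) hb)
    have h2 := Set.ncard_le_ncard hsub (Set.finite_Iio i)
    have h3 : (Set.Iio i).ncard = i := by
      rw [← Finset.coe_Iio, Set.ncard_coe_finset, Nat.card_Iio]
    omega

lemma conj_lt_iff (lam : ℕ → ℕ) (hA : Antitone lam) (N : ℕ)
    (hN : ∀ i, N ≤ i → lam i = 0) (i j : ℕ) : i < conjP lam j ↔ j < lam i := by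
  have hfin : {m : ℕ | j < lam m}.Finite := by
    apply Set.Finite.subset (Set.finite_Iio N)
    intro m hm
    simp only [Set.mem_setOf_eq] at hm
    simp only [Set.mem_Iio]
    by_contra h
    push_neg at h
    rw [hN m h] at hm
    omega
  have hdc : ∀ a b : ℕ, a ≤ b → b ∈ {m : ℕ | j < lam m} → a ∈ {m : ℕ | j < lam m} :=
    fun a b hab hb => lt_of_lt_of_le hb (hA hab)
  have H := mem_iff_lt_ncard' hfin hdc i
  exact ⟨fun h => H.mpr h, fun h => H.mp h⟩

lemma conj_antitone (lam : ℕ → ℕ) (hA : Antitone lam) (N : ℕ)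
    (hN : ∀ i, N ≤ i → lam i = 0) : Antitone (conjP lam) := by
  intro a b hab
  by_contra h
  push_neg at h
  have h1 := (conj_lt_iff lam hA N hN (conjP lam b - 1) b).mp (by omega)
  have h2 := (conj_lt_iff lam hA N hN (conjP lam b - 1) a).mpr (lt_of_le_of_lt hab h1)
  omega

lemma conj_le (lam : ℕ → ℕ) (hA : Antitone lam) (N : ℕ)
    (hN : ∀ i, N ≤ i → lam i = 0) (j : ℕ) : conjP lam j ≤ N := by
  by_contra h
  push_neg at h
  have h1 := (conj_lt_iff lam hA N hN N j).mp (by omega)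
  rw [hN N le_rfl] at h1
  omega

lemma lam_le (lam : ℕ → ℕ) (hA : Antitone lam) (N M : ℕ)
    (hN : ∀ i, N ≤ i → lam i = 0) (hM : ∀ i, M ≤ i → conjP lam i = 0) (i : ℕ) :
    lam i ≤ M := by
  by_contra h
  push_neg at h
  have h1 := (conj_lt_iff lam hA N hN i M).mpr h
  rw [hM M le_rfl] at h1
  omega

/-- The key combinatorial fact: the modified Frobenius coordinates of `λ'` together with the
negated complement coordinates of `λ` fill up the interval `(−M, N]`. -/
lemma key_sum (G : ℤ → ℝ) (lam : ℕ → ℕ) (hA : Antitone lam) (N M : ℕ)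
    (hN : ∀ i, N ≤ i → lam i = 0) (hM : ∀ i, M ≤ i → conjP lam i = 0) :
    (∑ n ∈ range M, G ((conjP lam n : ℤ) - n)) +
      (∑ n ∈ range N, G ((n : ℤ) + 1 - lam n)) =
    ∑ t ∈ Finset.Icc (1 - (M : ℤ)) (N : ℤ), G t := by
  set A := (range M).image (fun n => (conjP lam n : ℤ) - n) with hAdef
  set B := (range N).image (fun n : ℕ => (n : ℤ) + 1 - lam n) with hBdef
  have hac := conj_antitone lam hA N hN
  have injA : ∀ x ∈ range M, ∀ y ∈ range M,
      (conjP lam x : ℤ) - x = (conjP lam y : ℤ) - y → x = y := by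
    intro x _ y _ h
    rcases le_total x y with hxy | hxy
    · have := hac hxy
      omega
    · have := hac hxy
      omega
  have injB : ∀ x ∈ range N, ∀ y ∈ range N,
      (x : ℤ) + 1 - lam x = (y : ℤ) + 1 - lam y → x = y := by
    intro x _ y _ h
    rcases le_total x y with hxy | hxy
    · have := hA hxy
      omega
    · have := hA hxy
      omega
  have hd : Disjoint A B := by
    rw [Finset.disjoint_left]
    intro t ht hb
    rw [hAdef, Finset.mem_image] at ht
    rw [hBdef, Finset.mem_image] at hb
    obtain ⟨j, hj, rfl⟩ := ht
    obtain ⟨i, hi, heq⟩ := hb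
    rcases lt_or_ge j (lam i) with h | h
    · have h2 := (conj_lt_iff lam hA N hN i j).mpr h
      omega
    · have h2 : ¬ i < conjP lam j := fun hc => by
        have := (conj_lt_iff lam hA N hN i j).mp hc
        omega
      push_neg at h2
      omega
  have hu : A ∪ B = Finset.Icc (1 - (M : ℤ)) (N : ℤ) := by
    apply Finset.eq_of_subset_of_card_le
    · intro t ht
      rw [Finset.mem_union] at ht
      rw [Finset.mem_Icc]
      rcases ht with ht | ht
      · rw [hAdef, Finset.mem_image] at ht
        obtain ⟨n, hn, rfl⟩ := ht
        rw [Finset.mem_range] at hn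
        have h1 := conj_le lam hA N hN n
        constructor <;> omega
      · rw [hBdef, Finset.mem_image] at ht
        obtain ⟨n, hn, rfl⟩ := ht
        rw [Finset.mem_range] at hn
        have h1 := lam_le lam hA N M hN hM n
        constructor <;> omega
    · have hcA : A.card = M := by
        rw [hAdef, Finset.card_image_of_injOn injA, Finset.card_range]
      have hcB : B.card = N := by
        rw [hBdef, Finset.card_image_of_injOn injB, Finset.card_range]
      rw [Finset.card_union_of_disjoint hd, hcA, hcB, Int.card_Icc]
      omega
  rw [← hu, Finset.sum_union hd, hAdef, hBdef, Finset.sum_image injA, Finset.sum_image injB]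

lemma conjP_zero (n : ℕ) : conjP (fun _ => 0) n = 0 := by
  unfold conjP
  convert Set.ncard_empty ℕ
  ext m
  simp

/-! ### The sign function -/

noncomputable def Gf (k : ℕ) (t : ℤ) : ℝ := (-1 : ℝ) ^ t * ((t : ℝ) - 1 / 2) ^ k

lemma npow_eq (a b : ℕ) : (-1 : ℝ) ^ ((a : ℤ) - b) = (-1 : ℝ) ^ (a + b) := by
  have h : ((a : ℤ) - b) = ((a + b : ℕ) : ℤ) - 2 * (b : ℤ) := by push_cast; ring
  rw [h, zpow_sub₀ (by norm_num : (-1 : ℝ) ≠ 0), zpow_natCast]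
  have h2 : (-1 : ℝ) ^ (2 * (b : ℤ)) = 1 := by
    rw [zpow_mul]
    norm_num
  rw [h2, div_one]

lemma termA (k a n : ℕ) :
    (-1 : ℝ) ^ (a + n) * ((a : ℝ) - n - 1 / 2) ^ k = Gf k ((a : ℤ) - n) := by
  unfold Gf
  rw [npow_eq]
  congr 2
  push_cast
  ring

lemma termB (k n : ℕ) :
    (-1 : ℝ) ^ n * (-(n : ℝ) - 1 / 2) ^ k = Gf k (-(n : ℤ)) := by
  have h := termA k 0 n
  simp only [Nat.cast_zero, zero_add, zero_sub] at h
  rw [← h]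

lemma Gf_one_sub (k : ℕ) (t : ℤ) : Gf k (1 - t) = -((-1 : ℝ) ^ k * Gf k t) := by
  unfold Gf
  have h2 : ((-1 : ℝ) ^ t) * ((-1 : ℝ) ^ t) = 1 := by
    rw [← zpow_add₀ (by norm_num : (-1 : ℝ) ≠ 0)]
    have : t + t = 2 * t := by ring
    rw [this, zpow_mul]
    norm_num
  have h1 : (-1 : ℝ) ^ (1 - t) = -(-1 : ℝ) ^ t := by
    rw [zpow_sub₀ (by norm_num : (-1 : ℝ) ≠ 0), zpow_one, div_eq_mul_inv,
      inv_eq_of_mul_eq_one_right h2]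
    ring
  have h3 : (((1 - t : ℤ) : ℝ)) - 1 / 2 = -((t : ℝ) - 1 / 2) := by push_cast; ring
  rw [h1, h3, neg_pow]
  ring

/-! ### The constants vanish in odd degree -/

lemma ckQ_odd (k : ℕ) (hk : Odd k) : ckQ k = 0 := by
  set f : PowerSeries ℚ :=
    PowerSeries.mk fun n => (((1 : ℚ) / 2) ^ n + (-(1 : ℚ) / 2) ^ n) / n.factorial with hf
  have hc : PowerSeries.constantCoeff f ≠ 0 := by
    rw [hf]
    simp [PowerSeries.constantCoeff_mk]
  have hre : PowerSeries.rescale (-1 : ℚ) f = f := by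
    ext n
    rw [PowerSeries.coeff_rescale, hf, PowerSeries.coeff_mk]
    rcases Nat.even_or_odd n with h | h
    · rw [h.neg_one_pow, one_mul]
    · rw [h.neg_one_pow]
      have hneg : ((-(1 : ℚ)) / 2) ^ n = -(((1 : ℚ) / 2) ^ n) := by
        rw [neg_div, neg_pow, h.neg_one_pow]
        ring
      rw [hneg]
      ring
  have hmul : f * f⁻¹ = 1 := PowerSeries.mul_inv_cancel f hc
  have hinv : PowerSeries.rescale (-1 : ℚ) f⁻¹ = f⁻¹ := by
    have h2 := congrArg (PowerSeries.rescale (-1 : ℚ)) hmul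
    rw [map_mul, map_one, hre] at h2
    calc PowerSeries.rescale (-1 : ℚ) f⁻¹
        = (f⁻¹ * f) * PowerSeries.rescale (-1 : ℚ) f⁻¹ := by
          rw [mul_comm f⁻¹ f, hmul, one_mul]
      _ = f⁻¹ * (f * PowerSeries.rescale (-1 : ℚ) f⁻¹) := by ring
      _ = f⁻¹ := by rw [h2, mul_one]
  have hco : PowerSeries.coeff k f⁻¹ = (-1 : ℚ) ^ k * PowerSeries.coeff k f⁻¹ := by
    conv_lhs => rw [← hinv]
    rw [PowerSeries.coeff_rescale]
  rw [hk.neg_one_pow] at hco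
  have : PowerSeries.coeff k f⁻¹ = 0 := by linarith
  unfold ckQ
  rw [← hf, this, mul_zero]

/-! ### Main theorem -/

/-- `p̄_k(λ') = (-1)^k p̄_k(λ)`. -/
theorem stmt14 (k : ℕ) (lam : ℕ → ℕ) (hA : Antitone lam)
    (N M : ℕ) (hN : ∀ i, N ≤ i → lam i = 0) (hM : ∀ i, M ≤ i → conjP lam i = 0) :
    pbar k (conjP lam) M = (-1) ^ k * pbar k lam N := by
  have hG : ∀ (mu : ℕ → ℕ) (K : ℕ), pbar k mu K =
      (∑ n ∈ range K, (Gf k ((mu n : ℤ) - n) - Gf k (-(n : ℤ)))) + (ckQ k : ℝ) := by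
    intro mu K
    unfold pbar
    congr 1
    refine Finset.sum_congr rfl fun n _ => ?_
    rw [termA, termB]
  rw [hG, hG]
  have hsum1 := key_sum (Gf k) lam hA N M hN hM
  have hsum2 := key_sum (Gf k) (fun _ => 0) (antitone_const) N M (fun i _ => rfl)
    (fun i _ => conjP_zero i)
  simp only [conjP_zero, Nat.cast_zero, CharP.cast_eq_zero, zero_sub, sub_zero] at hsum2
  have hck : (-1 : ℝ) ^ k * ((ckQ k : ℝ)) = (ckQ k : ℝ) := by
    rcases Nat.even_or_odd k with hk | hk
    · rw [hk.neg_one_pow, one_mul]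
    · rw [ckQ_odd k hk]
      simp
  have hL : ∑ n ∈ range M, (Gf k ((conjP lam n : ℤ) - n) - Gf k (-(n : ℤ)))
      = (∑ n ∈ range M, Gf k ((conjP lam n : ℤ) - n))
        - (∑ n ∈ range M, Gf k (-(n : ℤ))) := Finset.sum_sub_distrib ..
  have hR : (-1 : ℝ) ^ k * (∑ n ∈ range N, (Gf k ((lam n : ℤ) - n) - Gf k (-(n : ℤ))))
      = (∑ n ∈ range N, Gf k ((n : ℤ) + 1))
        - (∑ n ∈ range N, Gf k ((n : ℤ) + 1 - lam n)) := by
    rw [Finset.mul_sum, ← Finset.sum_sub_distrib]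
    refine Finset.sum_congr rfl fun n _ => ?_
    have hodd1 : (-1 : ℝ) ^ k * Gf k ((lam n : ℤ) - n) = -Gf k ((n : ℤ) + 1 - lam n) := by
      have e1 : (n : ℤ) + 1 - lam n = 1 - ((lam n : ℤ) - n) := by ring
      rw [e1, Gf_one_sub]
      ring
    have hodd2 : (-1 : ℝ) ^ k * Gf k (-(n : ℤ)) = -Gf k ((n : ℤ) + 1) := by
      have e2 : (n : ℤ) + 1 = 1 - (-(n : ℤ)) := by ring
      rw [e2, Gf_one_sub]
      ring
    rw [mul_sub, hodd1, hodd2]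
    ring
  rw [hL, mul_add, hR, hck]
  linarith [hsum1, hsum2]
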